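/- For every integer m ≥ 1, every real number can be written as the sum of two m-ultra numbers. -/

import Mathlib

open Polynomial

/-- The primitive minimal polynomial over ℤ of a real number. -/
noncomputable def intMinpoly (α : ℝ) : Polynomial ℤ :=
  (IsLocalization.integerNormalization (nonZeroDivisors ℤ) (minpoly ℚ α)).primPart

/-- The height of an algebraic number: the maximum of the absolute values of the
coefficients of its primitive minimal polynomial over ℤ. -/
noncomputable def algHeight (α : ℝ) : ℕ :=
  (intMinpoly α).support.sup fun i => ((intMinpoly α).coeff i).natAbs

/-- `α` is a real algebraic number of degree exactly `m`. -/
def DegreeExactly (m : ℕ) (α : ℝ) : Prop :=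
  IsAlgebraic ℚ α ∧ (minpoly ℚ α).natDegree = m

/-- `exp^[3](x) = e^(e^(e^x))`. -/
noncomputable def expCube (x : ℝ) : ℝ := Real.exp (Real.exp (Real.exp x))

/-- `ξ` is an `m`-ultra number: there is a sequence `(α_n)_{n ≥ 1}` of pairwise distinct
real algebraic numbers of degree exactly `m` with
`0 < |ξ - α_n| < (exp^[3](H(α_n)))^{-n}` for all `n ≥ 1`. Here `a k` plays the
role of `α_{k+1}`. -/
def IsMUltra (m : ℕ) (ξ : ℝ) : Prop :=
  ∃ a : ℕ → ℝ, Function.Injective a ∧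
    ∀ n : ℕ, DegreeExactly m (a n) ∧ 0 < |ξ - a n| ∧
      |ξ - a n| < (expCube (algHeight (a n)))⁻¹ ^ (n + 1)

/-- A function `f : ℝ → ℝ` is transcendental if the only complex two-variable polynomial
`P` with `P (x, f x) = 0` for all real `x` is the zero polynomial. -/
def TranscendentalFun (f : ℝ → ℝ) : Prop :=
  ∀ P : MvPolynomial (Fin 2) ℂ,
    (∀ x : ℝ, MvPolynomial.eval ![(x : ℂ), (f x : ℂ)] P = 0) → P = 0

lemma intMinpoly_map (α : ℝ) (hα : IsAlgebraic ℚ α) :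
    ∃ u : ℚ, u ≠ 0 ∧ (intMinpoly α).map (algebraMap ℤ ℚ) = C u * minpoly ℚ α := by
  have hP0 : minpoly ℚ α ≠ 0 := minpoly.ne_zero hα.isIntegral
  set P := minpoly ℚ α with hP
  set N := IsLocalization.integerNormalization (nonZeroDivisors ℤ) P with hN
  obtain ⟨b, hb⟩ := IsLocalization.integerNormalization_map_to_map (nonZeroDivisors ℤ) P
  have hb0 : (b : ℤ) ≠ 0 := nonZeroDivisors.coe_ne_zero b
  have hN0 : N ≠ 0 := fun h => hP0 (IsFractionRing.integerNormalization_eq_zero_iff.mp h)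
  have hcont : (N.content : ℤ) ≠ 0 := fun h => hN0 (content_eq_zero_iff.mp h)
  have hcontQ : ((N.content : ℤ) : ℚ) ≠ 0 := Int.cast_ne_zero.mpr hcont
  refine ⟨((b : ℤ) : ℚ) / ((N.content : ℤ) : ℚ), div_ne_zero (Int.cast_ne_zero.mpr hb0) hcontQ, ?_⟩
  have h1 : N = C (N.content) * N.primPart := N.eq_C_content_mul_primPart
  have h2 : N.map (algebraMap ℤ ℚ) = C ((N.content : ℤ) : ℚ) * (intMinpoly α).map (algebraMap ℤ ℚ) := by
    conv_lhs => rw [h1]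
    rw [Polynomial.map_mul, map_C]
    rfl
  have hbQ : N.map (algebraMap ℤ ℚ) = C ((b : ℤ) : ℚ) * P := by
    rw [hb]
    ext i
    simp [coeff_smul, zsmul_eq_mul]
  rw [h2] at hbQ
  have := congrArg (fun q => C (((N.content : ℤ) : ℚ))⁻¹ * q) hbQ
  simp only [← mul_assoc, ← C_mul, inv_mul_cancel₀ hcontQ, C_1, one_mul] at this
  rw [div_eq_inv_mul]
  exact this

lemma intMinpoly_isPrimitive (α : ℝ) : (intMinpoly α).IsPrimitive :=
  Polynomial.isPrimitive_primPart _

lemma intMinpoly_ne_zero (α : ℝ) (hα : IsAlgebraic ℚ α) : intMinpoly α ≠ 0 := by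
  obtain ⟨u, hu, h⟩ := intMinpoly_map α hα
  intro h0
  rw [h0, Polynomial.map_zero] at h
  exact minpoly.ne_zero hα.isIntegral (by
    have := h.symm
    rcases mul_eq_zero.mp this with h' | h'
    · exact absurd (C_eq_zero.mp h') hu
    · exact h')

lemma intMinpoly_natDegree (α : ℝ) (hα : IsAlgebraic ℚ α) :
    (intMinpoly α).natDegree = (minpoly ℚ α).natDegree := by
  obtain ⟨u, hu, h⟩ := intMinpoly_map α hα
  have : ((intMinpoly α).map (algebraMap ℤ ℚ)).natDegree = (intMinpoly α).natDegree :=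
    natDegree_map_eq_of_injective (algebraMap ℤ ℚ).injective_int _
  rw [← this, h, natDegree_C_mul hu]

lemma intMinpoly_dvd (α : ℝ) (hα : IsAlgebraic ℚ α) {Q : Polynomial ℤ}
    (hQ : Polynomial.aeval α Q = 0) : intMinpoly α ∣ Q := by
  by_cases hQ0 : Q = 0
  · simp [hQ0]
  obtain ⟨u, hu, h⟩ := intMinpoly_map α hα
  -- minpoly divides Q.map
  have h1 : minpoly ℚ α ∣ Q.map (algebraMap ℤ ℚ) := by
    apply minpoly.dvd
    rw [aeval_map_algebraMap]
    exact hQ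
  -- intMinpoly map divides Q map
  have h2 : (intMinpoly α).map (algebraMap ℤ ℚ) ∣ Q.map (algebraMap ℤ ℚ) := by
    rw [h]
    exact (mul_comm (C u) (minpoly ℚ α)) ▸ ((isUnit_C.mpr hu.isUnit).mul_right_dvd.mpr h1)
  -- pass to primitive parts
  have h3 : intMinpoly α ∣ Q.primPart := by
    apply (intMinpoly_isPrimitive α).dvd_of_fraction_map_dvd_fraction_map (K := ℚ)
    have hc : Q.content ≠ 0 := fun h => hQ0 (content_eq_zero_iff.mp h)
    have hcQ : ((Q.content : ℤ) : ℚ) ≠ 0 := Int.cast_ne_zero.mpr hc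
    have hQ' : Q.map (algebraMap ℤ ℚ)
        = C ((Q.content : ℤ) : ℚ) * Q.primPart.map (algebraMap ℤ ℚ) := by
      conv_lhs => rw [Q.eq_C_content_mul_primPart]
      rw [Polynomial.map_mul, map_C]
      rfl
    rw [hQ'] at h2
    exact (isUnit_C.mpr hcQ.isUnit).dvd_mul_left.mp h2
  exact h3.trans Q.primPart_dvd

lemma algHeight_le (α : ℝ) (hα : IsAlgebraic ℚ α) {Q : Polynomial ℤ} (hQ0 : Q ≠ 0)
    (hQ : Polynomial.aeval α Q = 0) (hdeg : Q.natDegree = (minpoly ℚ α).natDegree)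
    {M : ℕ} (hM : ∀ i, (Q.coeff i).natAbs ≤ M) : algHeight α ≤ M := by
  obtain ⟨T, hT⟩ := intMinpoly_dvd α hα hQ
  have hi0 : intMinpoly α ≠ 0 := intMinpoly_ne_zero α hα
  have hT0 : T ≠ 0 := by rintro rfl; rw [mul_zero] at hT; exact hQ0 hT
  have hdm : Q.natDegree = (intMinpoly α).natDegree + T.natDegree := by
    rw [hT, natDegree_mul hi0 hT0]
  have hTdeg : T.natDegree = 0 := by
    have := intMinpoly_natDegree α hα
    omega
  obtain ⟨t, rfl⟩ : ∃ t, T = C t := ⟨T.coeff 0, eq_C_of_natDegree_eq_zero hTdeg⟩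
  have ht0 : t ≠ 0 := fun h => hT0 (by rw [h, C_0])
  have ht1 : 1 ≤ t.natAbs := Int.natAbs_pos.mpr ht0
  apply Finset.sup_le
  intro i _
  have : (Q.coeff i).natAbs = ((intMinpoly α).coeff i).natAbs * t.natAbs := by
    rw [hT, coeff_mul_C, Int.natAbs_mul]
  calc ((intMinpoly α).coeff i).natAbs
      = ((intMinpoly α).coeff i).natAbs * 1 := (mul_one _).symm
    _ ≤ ((intMinpoly α).coeff i).natAbs * t.natAbs := Nat.mul_le_mul_left _ ht1
    _ = (Q.coeff i).natAbs := this.symm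
    _ ≤ M := hM i

noncomputable def cc (m : ℕ) : ℝ := (2:ℝ) ^ ((m:ℝ)⁻¹)

lemma cc_pow (m : ℕ) (hm : 1 ≤ m) : (cc m) ^ m = 2 := by
  rw [cc, ← Real.rpow_natCast ((2:ℝ) ^ ((m:ℝ)⁻¹)) m, ← Real.rpow_mul (by norm_num),
    inv_mul_cancel₀ (by positivity), Real.rpow_one]

lemma X_pow_sub_two_irred_int (m : ℕ) (hm : 1 ≤ m) :
    Irreducible ((X : Polynomial ℤ) ^ m - C 2) := by
  have hmono : ((X : Polynomial ℤ) ^ m - C 2).Monic := monic_X_pow_sub_C _ (by omega)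
  have hdeg : ((X : Polynomial ℤ) ^ m - C 2).natDegree = m := by
    rw [natDegree_X_pow_sub_C]
  have heis : ((X : Polynomial ℤ) ^ m - C 2).IsEisensteinAt (Ideal.span {2}) := by
    constructor
    · rw [hmono.leadingCoeff]
      intro h
      rw [Ideal.mem_span_singleton] at h
      omega
    · intro n hn
      rw [hdeg] at hn
      rw [coeff_sub, coeff_X_pow, coeff_C, if_neg hn.ne]
      by_cases h0 : n = 0
      · rw [if_pos h0, Ideal.mem_span_singleton]
        norm_num
      · rw [if_neg h0]
        simp
    · rw [coeff_sub, coeff_X_pow, coeff_C, if_neg (by omega), if_pos rfl]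
      intro h
      rw [Ideal.span_singleton_pow, Ideal.mem_span_singleton] at h
      have h4 : (4 : ℤ) ∣ -2 := by
        have : (2:ℤ)^2 = 4 := by norm_num
        rwa [this] at h
      norm_num at h4
  exact heis.irreducible (Ideal.span_singleton_prime (by norm_num) |>.mpr Int.prime_two)
    hmono.isPrimitive (by omega)

lemma minpoly_cc (m : ℕ) (hm : 1 ≤ m) : minpoly ℚ (cc m) = X ^ m - C (2:ℚ) := by
  have hmono : ((X : Polynomial ℤ)^m - C 2).Monic := monic_X_pow_sub_C _ (by omega)
  have hirr : Irreducible ((X : Polynomial ℚ)^m - C 2) := by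
    have := (hmono.irreducible_iff_irreducible_map_fraction_map (K := ℚ)).mp
      (X_pow_sub_two_irred_int m hm)
    have hmap : ((X : Polynomial ℤ)^m - C 2).map (algebraMap ℤ ℚ)
        = (X : Polynomial ℚ)^m - C 2 := by
      rw [Polynomial.map_sub, Polynomial.map_pow, Polynomial.map_X, Polynomial.map_C]
      norm_num
    rwa [hmap] at this
  have monicQ : ((X : Polynomial ℚ)^m - C 2).Monic := monic_X_pow_sub_C _ (by omega)
  have root : aeval (cc m) ((X : Polynomial ℚ)^m - C 2) = 0 := by
    simp [cc_pow m hm]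
  exact (minpoly.eq_of_irreducible_of_monic hirr root monicQ).symm

lemma isIntegral_cc (m : ℕ) (hm : 1 ≤ m) : IsIntegral ℚ (cc m) := by
  refine ⟨(X : Polynomial ℚ)^m - C 2, monic_X_pow_sub_C _ (by omega), ?_⟩
  rw [← aeval_def]
  simp [cc_pow m hm]

lemma degreeExactly_cc_add (m : ℕ) (hm : 1 ≤ m) (r : ℚ) :
    (IsAlgebraic ℚ (cc m + (r : ℝ))) ∧ (minpoly ℚ (cc m + (r : ℝ))).natDegree = m := by
  have hint : IsIntegral ℚ (cc m + (r : ℝ)) :=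
    (isIntegral_cc m hm).add (isIntegral_algebraMap (x := r))
  constructor
  · exact hint.isAlgebraic
  · have h : minpoly ℚ (cc m + (r : ℝ)) = (minpoly ℚ (cc m)).comp (X - C r) := by
      have := minpoly.add_algebraMap (A := ℚ) (cc m) r
      exact this
    rw [h, natDegree_comp, minpoly_cc m hm, natDegree_X_pow_sub_C, natDegree_X_sub_C, mul_one]

lemma coeff_explicit (f : ℕ → ℤ) (N k : ℕ) :
    (∑ i ∈ Finset.range N, C (f i) * X^i).coeff k = if k < N then f k else 0 := by
  rw [finset_sum_coeff]
  simp only [coeff_C_mul, coeff_X_pow, mul_ite, mul_one, mul_zero]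
  simp only [eq_comm (a := k)]
  rw [Finset.sum_ite_eq' (Finset.range N) k f]
  simp [Finset.mem_range]

-- the explicit annihilating polynomial
noncomputable def QQ (m e : ℕ) (p : ℤ) : Polynomial ℤ :=
  (∑ i ∈ Finset.range (m+1), C ((m.choose i : ℤ) * 10^(e*i) * (-p)^(m-i)) * X^i)
    - C (2 * 10^(e*m))

lemma QQ_coeff (m e : ℕ) (p : ℤ) (k : ℕ) :
    (QQ m e p).coeff k = (if k < m+1 then (m.choose k : ℤ) * 10^(e*k) * (-p)^(m-k) else 0)
      - (if k = 0 then 2 * 10^(e*m) else 0) := by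
  rw [QQ, coeff_sub, coeff_explicit, coeff_C]

lemma QQ_natDegree (m e : ℕ) (hm : 1 ≤ m) (p : ℤ) : (QQ m e p).natDegree = m := by
  have hle : (QQ m e p).natDegree ≤ m := by
    rw [natDegree_le_iff_coeff_eq_zero]
    intro N hN
    rw [QQ_coeff]
    rw [if_neg (by omega), if_neg (by omega), sub_zero]
  refine natDegree_eq_of_le_of_coeff_ne_zero hle ?_
  rw [QQ_coeff, if_pos (by omega), if_neg (by omega), sub_zero, Nat.choose_self,
    Nat.sub_self, pow_zero, mul_one, Nat.cast_one, one_mul]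
  positivity

lemma QQ_ne_zero (m e : ℕ) (hm : 1 ≤ m) (p : ℤ) : QQ m e p ≠ 0 := by
  intro h
  have := QQ_natDegree m e hm p
  rw [h, natDegree_zero] at this
  omega

lemma QQ_coeff_natAbs (m e : ℕ) (p : ℤ) (k : ℕ) :
    ((QQ m e p).coeff k).natAbs ≤ (p.natAbs + 10^e)^m + 2 * (10^e)^m := by
  rw [QQ_coeff]
  refine le_trans (Int.natAbs_sub_le _ _) ?_
  have h1 : ((if k < m+1 then (m.choose k : ℤ) * 10^(e*k) * (-p)^(m-k) else 0)).natAbs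
      ≤ (p.natAbs + 10^e)^m := by
    split_ifs with h
    · rw [Int.natAbs_mul, Int.natAbs_mul]
      have e1 : ((m.choose k : ℤ)).natAbs = m.choose k := by simp
      have e2 : ((10:ℤ)^(e*k)).natAbs = 10^(e*k) := by
        rw [Int.natAbs_pow]; rfl
      have e3 : ((-p)^(m-k)).natAbs = p.natAbs^(m-k) := by
        rw [Int.natAbs_pow, Int.natAbs_neg]
      rw [e1, e2, e3]
      calc m.choose k * 10^(e*k) * p.natAbs^(m-k)
          = (10^e)^k * p.natAbs^(m-k) * m.choose k := by
            rw [← pow_mul]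
            ring
        _ ≤ ∑ i ∈ Finset.range (m+1), (10^e)^i * p.natAbs^(m-i) * m.choose i := by
            apply Finset.single_le_sum (f := fun i => (10^e)^i * p.natAbs^(m-i) * m.choose i)
              (fun i _ => Nat.zero_le _)
            exact Finset.mem_range.mpr h
        _ = (10^e + p.natAbs)^m := (add_pow _ _ _).symm
        _ = (p.natAbs + 10^e)^m := by rw [add_comm]
    · simp
  have h2 : ((if k = 0 then (2:ℤ) * 10^(e*m) else 0)).natAbs ≤ 2 * (10^e)^m := by
    split_ifs
    · rw [Int.natAbs_mul]
      have : ((10:ℤ)^(e*m)).natAbs = (10^e)^m := by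
        rw [Int.natAbs_pow, pow_mul]; rfl
      rw [this]
      simp
    · simp
  omega

lemma QQ_aeval (m e : ℕ) (hm : 1 ≤ m) (r : ℚ) (p : ℤ) (hp : (r:ℚ) * 10^e = (p:ℚ)) :
    Polynomial.aeval (cc m + (r:ℝ)) (QQ m e p) = 0 := by
  have hpR : (r:ℝ) * 10^e = (p:ℝ) := by exact_mod_cast congrArg (fun q : ℚ => (q:ℝ)) hp
  set α : ℝ := cc m + (r:ℝ) with hα
  rw [QQ, map_sub, map_sum]
  have hterm : ∀ i ∈ Finset.range (m+1),
      (Polynomial.aeval α) (C ((m.choose i : ℤ) * 10^(e*i) * (-p)^(m-i)) * X^i)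
      = ((10:ℝ)^e * α)^i * (-(p:ℝ))^(m-i) * (m.choose i : ℝ) := by
    intro i hi
    simp only [map_mul, aeval_C, map_pow, aeval_X, eq_intCast, map_ofNat, map_natCast, map_intCast, map_neg]
    push_cast
    rw [mul_pow, ← pow_mul]
    ring
  rw [Finset.sum_congr rfl hterm, ← add_pow]
  have h2 : (10:ℝ)^e * α + (-(p:ℝ)) = (10:ℝ)^e * cc m := by
    rw [hα, mul_add, ← hpR]; ring
  rw [h2, mul_pow, cc_pow m hm]
  have h3 : (Polynomial.aeval α) (C ((2:ℤ) * 10^(e*m))) = 2 * (10:ℝ)^(e*m) := by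
    rw [aeval_C, eq_intCast]
    push_cast
    norm_num
  rw [h3, pow_mul]
  ring

namespace MU
noncomputable def AA (m : ℕ) (y : ℝ) : ℝ := (|y| + 5)^m + 2

noncomputable def gg (m : ℕ) (y : ℝ) : ℕ → ℕ
  | 0 => 1
  | (j+1) => gg m y j + 3 +
      ⌈((j:ℝ)+1) * Real.exp (Real.exp (AA m y * 10 ^ (m * (gg m y j + 1))))⌉₊

variable (m : ℕ) (y : ℝ)

lemma gg_step (j : ℕ) : gg m y j + 3 ≤ gg m y (j+1) := by
  rw [gg]; omega

lemma gg_pos (j : ℕ) : 1 ≤ gg m y j := by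
  induction j with
  | zero => rfl
  | succ j ih => have := gg_step m y j; omega

lemma gg_mono : StrictMono (gg m y) := by
  apply strictMono_nat_of_lt_succ
  intro j
  have := gg_step m y j; omega

lemma gg_ge (j : ℕ) : j + 1 ≤ gg m y j := by
  induction j with
  | zero => rfl
  | succ j ih => have := gg_step m y j; omega

noncomputable def ww (k : ℕ) : ℝ := ((10:ℝ)^k)⁻¹

lemma ww_pos (k : ℕ) : 0 < ww k := by rw [ww]; positivity

lemma ww_anti {k l : ℕ} (h : k ≤ l) : ww l ≤ ww k := by
  rw [ww, ww]
  apply inv_anti₀ (by positivity)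
  exact pow_le_pow_right₀ (by norm_num) h

lemma ww_lt {k l : ℕ} (h : k < l) : ww l < ww k := by
  rw [ww, ww]
  apply inv_strictAnti₀ (by positivity)
  exact pow_lt_pow_right₀ (by norm_num) h

lemma ww_le_one (k : ℕ) : ww k ≤ 1 := by
  have := ww_anti (Nat.zero_le k)
  simpa [ww] using this

lemma ww_add (k l : ℕ) : ww (k + l) = ww k * ww l := by
  rw [ww, ww, ww, pow_add, mul_inv]

lemma AA_pos : 0 < AA m y := by rw [AA]; positivity

lemma expCube_ge_one (x : ℝ) (hx : 0 ≤ x) : 1 ≤ Real.exp (Real.exp (Real.exp x)) := by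
  apply Real.one_le_exp
  positivity

-- the key growth estimate
lemma gg_key (j n : ℕ) (hn : n ≤ j) :
    5 * ww (gg m y (j+1))
      ≤ (Real.exp (Real.exp (Real.exp (AA m y * 10 ^ (m * (gg m y j + 1))))))⁻¹ ^ (n+1) := by
  set H : ℝ := AA m y * 10 ^ (m * (gg m y j + 1)) with hH
  have hH0 : 0 ≤ H := by
    rw [hH]; have := AA_pos m y; positivity
  set E : ℝ := Real.exp (Real.exp (Real.exp H)) with hE
  have hE1 : 1 ≤ E := expCube_ge_one H hH0
  have hE0 : 0 < E := lt_of_lt_of_le one_pos hE1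
  have key : 5 * E ^ (n+1) ≤ (10:ℝ) ^ (gg m y (j+1)) := by
    have h1 : E ^ (n+1) ≤ E ^ (j+1) := pow_le_pow_right₀ hE1 (by omega)
    set N : ℕ := ⌈((j:ℝ)+1) * Real.exp (Real.exp H)⌉₊ with hN
    have hgN : (4:ℝ) + ((j:ℝ)+1) * Real.exp (Real.exp H) ≤ (gg m y (j+1) : ℕ) := by
      have h2 : ((j:ℝ)+1) * Real.exp (Real.exp H) ≤ (N:ℝ) := Nat.le_ceil _
      have h3 : gg m y j + 3 + N = gg m y (j+1) := by rw [gg]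
      have h4 : (1:ℕ) ≤ gg m y j := gg_pos m y j
      have : (4:ℕ) + N ≤ gg m y (j+1) := by omega
      have h5 : ((4:ℕ) + N : ℝ) ≤ (gg m y (j+1) : ℝ) := by exact_mod_cast this
      push_cast at h5
      linarith
    have h6 : Real.exp ((gg m y (j+1) : ℝ)) ≤ (10:ℝ) ^ (gg m y (j+1)) := by
      have : Real.exp ((gg m y (j+1) : ℝ)) = Real.exp 1 ^ (gg m y (j+1)) := by
        rw [← Real.exp_nat_mul, mul_one]
      rw [this]
      apply pow_le_pow_left₀ (Real.exp_pos 1).le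
      linarith [Real.exp_one_lt_d9]
    have h7 : 5 * E ^ (j+1) ≤ Real.exp ((gg m y (j+1) : ℝ)) := by
      have e1 : Real.exp ((4:ℝ) + ((j:ℝ)+1) * Real.exp (Real.exp H))
          ≤ Real.exp ((gg m y (j+1) : ℝ)) := Real.exp_le_exp.mpr hgN
      have e2 : Real.exp ((4:ℝ) + ((j:ℝ)+1) * Real.exp (Real.exp H))
          = Real.exp 4 * E ^ (j+1) := by
        rw [Real.exp_add]
        congr 1
        rw [hE, ← Real.exp_nat_mul]
        congr 1
        push_cast
        ring
      have e3 : (5:ℝ) ≤ Real.exp 4 := by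
        have := Real.add_one_le_exp (4:ℝ)
        linarith
      have e4 : 5 * E ^ (j+1) ≤ Real.exp 4 * E ^ (j+1) := by
        apply mul_le_mul_of_nonneg_right e3 (by positivity)
      linarith
    calc 5 * E^(n+1) ≤ 5 * E^(j+1) := by nlinarith
      _ ≤ Real.exp ((gg m y (j+1) : ℝ)) := h7
      _ ≤ _ := h6
  rw [ww, inv_pow]
  rw [mul_comm] at key ⊢
  have h10 : (0:ℝ) < (10:ℝ) ^ (gg m y (j+1)) := by positivity
  have hEp : (0:ℝ) < E ^ (n+1) := by positivity
  calc ((10:ℝ) ^ (gg m y (j+1)))⁻¹ * 5 ≤ (5 * E^(n+1))⁻¹ * 5 := by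
        apply mul_le_mul_of_nonneg_right _ (by norm_num)
        apply inv_anti₀ (by positivity)
        rw [mul_comm] at key; exact key
    _ ≤ (E ^ (n+1))⁻¹ := by
        rw [mul_inv]
        rw [mul_comm, ← mul_assoc]
        norm_num

noncomputable def TT (j : ℕ) : ℤ := ⌊y * 10 ^ gg m y j⌋

noncomputable def tt (j : ℕ) : ℚ := (TT m y j : ℚ) / 10 ^ gg m y j

noncomputable def dd (j : ℕ) : ℚ := tt m y (j+1) - tt m y j

noncomputable def zz (k : ℕ) : ℚ := ((10:ℚ)^k)⁻¹

noncomputable def uu (i : ℕ) : ℕ := gg m y (2*i) + 1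
noncomputable def vv (i : ℕ) : ℕ := gg m y (2*i+1) + 1

noncomputable def rr : ℕ → ℚ
  | 0 => tt m y 0 + dd m y 0 + zz (uu m y 0) - zz (vv m y 0)
  | (n+1) => rr n + dd m y (2*n+2) + zz (uu m y (n+1)) - zz (vv m y (n+1))

noncomputable def ss : ℕ → ℚ
  | 0 => dd m y 1 + zz (vv m y 0) - zz (uu m y 0) - zz (uu m y 1)
  | (n+1) => ss n + dd m y (2*n+3) + zz (vv m y (n+1)) - zz (uu m y (n+2))

lemma zz_cast (k : ℕ) : ((zz k : ℚ) : ℝ) = ww k := by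
  rw [zz, ww]; push_cast; ring

lemma tt_le (j : ℕ) : ((tt m y j : ℚ) : ℝ) ≤ y := by
  rw [tt]
  push_cast
  rw [div_le_iff₀ (by positivity)]
  exact Int.floor_le _

lemma lt_tt (j : ℕ) : y < ((tt m y j : ℚ) : ℝ) + ww (gg m y j) := by
  rw [tt, ww]
  push_cast
  rw [div_add' _ _ _ (by positivity), lt_div_iff₀ (by positivity)]
  have h1 := Int.lt_floor_add_one (y * 10 ^ gg m y j)
  rw [TT]
  have h2 : ((10:ℝ) ^ gg m y j)⁻¹ * 10 ^ gg m y j = 1 :=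
    inv_mul_cancel₀ (by positivity)
  nlinarith [h1, h2]

lemma dd_nonneg (j : ℕ) : (0:ℝ) ≤ ((dd m y j : ℚ) : ℝ) := by
  have hmono := (gg_mono m y).monotone (show j ≤ j + 1 by omega)
  set d : ℕ := gg m y (j+1) - gg m y j with hd
  have hdj : gg m y (j+1) = gg m y j + d := by omega
  have key : TT m y j * 10 ^ d ≤ TT m y (j+1) := by
    rw [TT, TT]
    apply Int.le_floor.mpr
    push_cast
    calc ((⌊y * 10 ^ gg m y j⌋ : ℝ)) * 10 ^ d ≤ (y * 10 ^ gg m y j) * 10 ^ d := by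
          have := Int.floor_le (y * 10 ^ gg m y j)
          nlinarith [pow_pos (show (0:ℝ) < 10 by norm_num) d]
      _ = y * 10 ^ (gg m y (j+1)) := by rw [hdj, pow_add]; ring
  rw [dd, tt, tt]
  push_cast
  rw [sub_nonneg, div_le_div_iff₀ (by positivity) (by positivity), hdj, pow_add]
  have hkey : ((TT m y j * 10 ^ d : ℤ) : ℝ) ≤ ((TT m y (j+1) : ℤ) : ℝ) := by exact_mod_cast key
  push_cast at hkey
  nlinarith [pow_pos (show (0:ℝ) < 10 by norm_num) (gg m y j), pow_pos (show (0:ℝ) < 10 by norm_num) d]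

lemma dd_le (j : ℕ) : ((dd m y j : ℚ) : ℝ) ≤ ww (gg m y j) := by
  rw [dd]
  push_cast
  have h1 := tt_le m y (j+1)
  have h2 := lt_tt m y j
  linarith


noncomputable def R (n : ℕ) : ℝ := ((rr m y n : ℚ) : ℝ)
noncomputable def S (n : ℕ) : ℝ := ((ss m y n : ℚ) : ℝ)
noncomputable def D (j : ℕ) : ℝ := ((dd m y j : ℚ) : ℝ)

lemma R_succ (n : ℕ) :
    R m y (n+1) = R m y n + D m y (2*n+2) + ww (uu m y (n+1)) - ww (vv m y (n+1)) := by
  rw [R, R, D, rr, ← zz_cast, ← zz_cast]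
  push_cast
  ring

lemma S_succ (n : ℕ) :
    S m y (n+1) = S m y n + D m y (2*n+3) + ww (vv m y (n+1)) - ww (uu m y (n+2)) := by
  rw [S, S, D, ss, ← zz_cast, ← zz_cast]
  push_cast
  ring

lemma uu_lt_vv (i : ℕ) : uu m y i < vv m y i := by
  rw [uu, vv]
  have := gg_mono m y (show 2*i < 2*i+1 by omega)
  omega

lemma vv_lt_uu (i : ℕ) : vv m y i < uu m y (i+1) := by
  rw [uu, vv]
  have := gg_mono m y (show 2*i+1 < 2*(i+1) by omega)
  omega

lemma R_mono : StrictMono (R m y) := by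
  apply strictMono_nat_of_lt_succ
  intro n
  rw [R_succ]
  have h1 := dd_nonneg m y (2*n+2)
  have h2 := ww_lt (uu_lt_vv m y (n+1))
  rw [← D] at h1
  linarith

lemma S_mono : StrictMono (S m y) := by
  apply strictMono_nat_of_lt_succ
  intro n
  rw [S_succ]
  have h1 := dd_nonneg m y (2*n+3)
  have h2 := ww_lt (vv_lt_uu m y (n+1))
  rw [← D] at h1
  linarith

lemma ww_tenth {a b : ℕ} (h : a + 1 ≤ b) : ww b ≤ ww a * (1/10) := by
  have : ww b ≤ ww (a+1) := ww_anti h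
  rw [ww_add] at this
  have : ww 1 = (1/10 : ℝ) := by rw [ww]; norm_num
  calc ww b ≤ ww (a+1) := ww_anti h
    _ = ww a * (1/10) := by rw [ww_add, this]

lemma R_tail (n : ℕ) : ∀ k, n ≤ k →
    R m y k - R m y n ≤ 2 * (ww (gg m y (2*n+2)) - ww (gg m y (2*k+2))) := by
  intro k hk
  induction k with
  | zero =>
    have : n = 0 := by omega
    subst this
    simp
  | succ k ih =>
    rcases Nat.lt_or_ge n (k+1) with h | h
    · have hnk : n ≤ k := by omega
      have IH := ih hnk
      rw [R_succ]
      have h1 : D m y (2*k+2) ≤ ww (gg m y (2*k+2)) := dd_le m y (2*k+2)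
      have h2 : ww (uu m y (k+1)) ≤ ww (gg m y (2*k+2)) * (1/10) := by
        apply ww_tenth
        rw [uu]
        have := (gg_mono m y).monotone (show 2*k+2 ≤ 2*(k+1) by omega)
        omega
      have h3 : (0:ℝ) < ww (vv m y (k+1)) := ww_pos _
      have h4 : ww (gg m y (2*(k+1)+2)) ≤ ww (gg m y (2*k+2)) * (1/10) := by
        apply ww_tenth
        have := gg_mono m y (show 2*k+2 < 2*(k+1)+2 by omega)
        omega
      have h5 : ww (gg m y (2*k+2)) ≤ ww (gg m y (2*n+2)) := by
        apply ww_anti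
        exact (gg_mono m y).monotone (by omega)
      have h6 : (0:ℝ) < ww (gg m y (2*k+2)) := ww_pos _
      linarith
    · have : n = k+1 := by omega
      subst this
      simp

lemma S_tail (n : ℕ) : ∀ k, n ≤ k →
    S m y k - S m y n ≤ 2 * (ww (gg m y (2*n+3)) - ww (gg m y (2*k+3))) := by
  intro k hk
  induction k with
  | zero =>
    have : n = 0 := by omega
    subst this
    simp
  | succ k ih =>
    rcases Nat.lt_or_ge n (k+1) with h | h
    · have hnk : n ≤ k := by omega
      have IH := ih hnk
      rw [S_succ]
      have h1 : D m y (2*k+3) ≤ ww (gg m y (2*k+3)) := dd_le m y (2*k+3)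
      have h2 : ww (vv m y (k+1)) ≤ ww (gg m y (2*k+3)) * (1/10) := by
        apply ww_tenth
        rw [vv]
        have := (gg_mono m y).monotone (show 2*k+3 ≤ 2*(k+1)+1 by omega)
        omega
      have h3 : (0:ℝ) < ww (uu m y (k+2)) := ww_pos _
      have h4 : ww (gg m y (2*(k+1)+3)) ≤ ww (gg m y (2*k+3)) * (1/10) := by
        apply ww_tenth
        have := gg_mono m y (show 2*k+3 < 2*(k+1)+3 by omega)
        omega
      have h5 : ww (gg m y (2*k+3)) ≤ ww (gg m y (2*n+3)) := by
        apply ww_anti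
        exact (gg_mono m y).monotone (by omega)
      have h6 : (0:ℝ) < ww (gg m y (2*k+3)) := ww_pos _
      linarith
    · have : n = k+1 := by omega
      subst this
      simp


noncomputable def LL : ℝ := ⨆ n, R m y n
noncomputable def SS : ℝ := ⨆ n, S m y n

lemma bddR : BddAbove (Set.range (R m y)) := by
  refine ⟨R m y 0 + 2 * ww (gg m y 2), ?_⟩
  rintro _ ⟨k, rfl⟩
  have h := R_tail m y 0 k (Nat.zero_le k)
  have h2 := ww_pos (gg m y (2*k+2))
  simp only [Nat.mul_zero, Nat.zero_add] at h
  linarith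

lemma bddS : BddAbove (Set.range (S m y)) := by
  refine ⟨S m y 0 + 2 * ww (gg m y 3), ?_⟩
  rintro _ ⟨k, rfl⟩
  have h := S_tail m y 0 k (Nat.zero_le k)
  have h2 := ww_pos (gg m y (2*k+3))
  simp only [Nat.mul_zero, Nat.zero_add] at h
  linarith

lemma R_le_L (n : ℕ) : R m y n ≤ LL m y := le_ciSup (bddR m y) n

lemma R_lt_L (n : ℕ) : R m y n < LL m y :=
  lt_of_lt_of_le (R_mono m y (Nat.lt_succ_self n)) (R_le_L m y (n+1))

lemma S_le_L (n : ℕ) : S m y n ≤ SS m y := le_ciSup (bddS m y) n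

lemma S_lt_L (n : ℕ) : S m y n < SS m y :=
  lt_of_lt_of_le (S_mono m y (Nat.lt_succ_self n)) (S_le_L m y (n+1))

lemma L_sub_R (n : ℕ) : LL m y - R m y n ≤ 2 * ww (gg m y (2*n+2)) := by
  have : LL m y ≤ R m y n + 2 * ww (gg m y (2*n+2)) := by
    apply ciSup_le
    intro k
    rcases Nat.le_total k n with h | h
    · have := (R_mono m y).monotone h
      have := ww_pos (gg m y (2*n+2))
      linarith
    · have h1 := R_tail m y n k h
      have h2 := ww_pos (gg m y (2*k+2))
      linarith
  linarith

lemma S_sub_S (n : ℕ) : SS m y - S m y n ≤ 2 * ww (gg m y (2*n+3)) := by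
  have : SS m y ≤ S m y n + 2 * ww (gg m y (2*n+3)) := by
    apply ciSup_le
    intro k
    rcases Nat.le_total k n with h | h
    · have := (S_mono m y).monotone h
      have := ww_pos (gg m y (2*n+3))
      linarith
    · have h1 := S_tail m y n k h
      have h2 := ww_pos (gg m y (2*k+3))
      linarith
  linarith

lemma rr_ss_sum (n : ℕ) : rr m y n + ss m y n = tt m y (2*n+2) - zz (uu m y (n+1)) := by
  induction n with
  | zero =>
    rw [rr, ss, dd, dd]
    ring
  | succ n ih =>
    rw [rr, ss]
    have e1 : 2*(n+1)+2 = 2*n+4 := by ring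
    have e2 : 2*(n+1) = 2*n+2 := by ring
    rw [e1, dd, dd]
    have e3 : 2*n+2+1 = 2*n+3 := by ring
    have e4 : 2*n+3+1 = 2*n+4 := by ring
    rw [e3, e4]
    have e5 : zz (uu m y (n+1+1)) = zz (uu m y (n+2)) := by norm_num
    rw [e5]
    linarith [ih]

lemma y_close (n : ℕ) : 0 ≤ y - (R m y n + S m y n) ∧
    y - (R m y n + S m y n) ≤ 2 * ww (gg m y (2*n+2)) := by
  have hsum : R m y n + S m y n = ((tt m y (2*n+2) : ℚ) : ℝ) - ww (uu m y (n+1)) := by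
    rw [R, S, ← zz_cast]
    push_cast
    exact_mod_cast congrArg (fun q : ℚ => (q:ℝ)) (rr_ss_sum m y n)
  have h1 := tt_le m y (2*n+2)
  have h2 := lt_tt m y (2*n+2)
  have h3 : ww (uu m y (n+1)) ≤ ww (gg m y (2*n+2)) := by
    apply ww_anti
    rw [uu]
    have := (gg_mono m y).monotone (show 2*n+2 ≤ 2*(n+1) by omega)
    omega
  have h4 := ww_pos (uu m y (n+1))
  constructor <;> [skip; skip] <;> rw [hsum] <;> linarith

lemma sum_eq : LL m y + SS m y = y := by
  by_contra hne
  set d : ℝ := |y - (LL m y + SS m y)| with hd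
  have hd0 : 0 < d := by
    rw [hd]
    apply abs_pos.mpr
    intro h
    apply hne
    linarith
  have hbound : ∀ n : ℕ, d ≤ 6 * ww n := by
    intro n
    have h1 := L_sub_R m y n
    have h2 := S_sub_S m y n
    have h3 := y_close m y n
    have h4 : R m y n ≤ LL m y := R_le_L m y n
    have h5 : S m y n ≤ SS m y := S_le_L m y n
    have h6 : ww (gg m y (2*n+3)) ≤ ww (gg m y (2*n+2)) :=
      ww_anti ((gg_mono m y).monotone (by omega))
    have h7 : ww (gg m y (2*n+2)) ≤ ww n := by
      apply ww_anti
      have := gg_ge m y (2*n+2)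
      omega
    have : |y - (LL m y + SS m y)| ≤ 6 * ww (gg m y (2*n+2)) := by
      rw [abs_le]
      constructor <;> linarith [h3.1, h3.2]
    linarith
  obtain ⟨n, hn⟩ := pow_unbounded_of_one_lt (6 / d) (show (1:ℝ) < 10 by norm_num)
  have := hbound n
  rw [ww] at this
  have h10 : (0:ℝ) < 10 ^ n := by positivity
  rw [div_lt_iff₀ hd0] at hn
  have : d * 10 ^ n ≤ 6 := by
    calc d * 10^n ≤ (6 * (10^n)⁻¹) * 10^n := by nlinarith
      _ = 6 := by field_simp
  nlinarith


def IsDen (e : ℕ) (q : ℚ) : Prop := ∃ p : ℤ, q * 10^e = (p:ℚ)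

lemma isDen_mono {e e' : ℕ} (h : e ≤ e') {q : ℚ} (hq : IsDen e q) : IsDen e' q := by
  obtain ⟨p, hp⟩ := hq
  refine ⟨p * 10^(e'-e), ?_⟩
  have : (10:ℚ)^e' = 10^e * 10^(e'-e) := by
    rw [← pow_add]
    congr 1
    omega
  rw [this, ← mul_assoc, hp]
  push_cast
  ring

lemma isDen_add {e : ℕ} {q q' : ℚ} (h : IsDen e q) (h' : IsDen e q') : IsDen e (q + q') := by
  obtain ⟨p, hp⟩ := h
  obtain ⟨p', hp'⟩ := h'
  exact ⟨p + p', by rw [add_mul, hp, hp']; push_cast; ring⟩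

lemma isDen_sub {e : ℕ} {q q' : ℚ} (h : IsDen e q) (h' : IsDen e q') : IsDen e (q - q') := by
  obtain ⟨p, hp⟩ := h
  obtain ⟨p', hp'⟩ := h'
  exact ⟨p - p', by rw [sub_mul, hp, hp']; push_cast; ring⟩

lemma isDen_tt (j : ℕ) : IsDen (gg m y j) (tt m y j) := by
  refine ⟨TT m y j, ?_⟩
  rw [tt]
  field_simp

lemma isDen_zz (k : ℕ) : IsDen k (zz k) := by
  refine ⟨1, ?_⟩
  rw [zz]
  field_simp
  norm_num

lemma isDen_dd {e : ℕ} (j : ℕ) (h : gg m y (j+1) ≤ e) : IsDen e (dd m y j) := by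
  rw [dd]
  apply isDen_sub
  · exact isDen_mono h (isDen_tt m y (j+1))
  · exact isDen_mono (le_trans ((gg_mono m y).monotone (Nat.le_succ j)) h) (isDen_tt m y j)

lemma gg_le_gg {j k : ℕ} (h : j ≤ k) : gg m y j ≤ gg m y k := (gg_mono m y).monotone h

lemma isDen_rr (n : ℕ) : IsDen (vv m y n) (rr m y n) := by
  induction n with
  | zero =>
    rw [rr, vv]
    apply isDen_sub
    apply isDen_add
    apply isDen_add
    · exact isDen_mono (by have := gg_le_gg m y (show 0 ≤ 2*0+1 by omega); omega)
        (isDen_tt m y 0)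
    · exact isDen_dd m y 0 (by have := gg_le_gg m y (show 0+1 ≤ 2*0+1 by omega); omega)
    · exact isDen_mono
        (by rw [uu]; have := gg_le_gg m y (show 2*0 ≤ 2*0+1 by omega); omega)
        (isDen_zz (uu m y 0))
    · exact isDen_mono (by omega) (isDen_zz (gg m y (2*0+1) + 1))
  | succ n ih =>
    rw [rr, vv]
    apply isDen_sub
    apply isDen_add
    apply isDen_add
    · refine isDen_mono ?_ ih
      rw [vv]
      have := gg_le_gg m y (show 2*n+1 ≤ 2*(n+1)+1 by omega)
      omega
    · refine isDen_dd m y (2*n+2) ?_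
      have := gg_le_gg m y (show 2*n+2+1 ≤ 2*(n+1)+1 by omega)
      omega
    · refine isDen_mono ?_ (isDen_zz (uu m y (n+1)))
      rw [uu]
      have := gg_le_gg m y (show 2*(n+1) ≤ 2*(n+1)+1 by omega)
      omega
    · exact isDen_mono (by rw [vv]) (isDen_zz (vv m y (n+1)))

lemma isDen_ss (n : ℕ) : IsDen (uu m y (n+1)) (ss m y n) := by
  induction n with
  | zero =>
    rw [ss, uu]
    apply isDen_sub
    apply isDen_sub
    apply isDen_add
    · refine isDen_dd m y 1 ?_
      have := gg_le_gg m y (show 1+1 ≤ 2*(0+1) by omega)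
      omega
    · refine isDen_mono ?_ (isDen_zz (vv m y 0))
      rw [vv]
      have := gg_le_gg m y (show 2*0+1 ≤ 2*(0+1) by omega)
      omega
    · refine isDen_mono ?_ (isDen_zz (uu m y 0))
      rw [uu]
      have := gg_le_gg m y (show 2*0 ≤ 2*(0+1) by omega)
      omega
    · exact isDen_mono (by rw [uu]) (isDen_zz (uu m y 1))
  | succ n ih =>
    rw [ss]
    apply isDen_sub
    apply isDen_add
    apply isDen_add
    · refine isDen_mono ?_ ih
      rw [uu, uu]
      have := gg_le_gg m y (show 2*(n+1) ≤ 2*(n+1+1) by omega)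
      omega
    · refine isDen_dd m y (2*n+3) ?_
      rw [uu]
      have := gg_le_gg m y (show 2*n+3+1 ≤ 2*(n+1+1) by omega)
      omega
    · refine isDen_mono ?_ (isDen_zz (vv m y (n+1)))
      rw [uu, vv]
      have := gg_le_gg m y (show 2*(n+1)+1 ≤ 2*(n+1+1) by omega)
      omega
    · exact isDen_mono (by rw [uu]) (isDen_zz (uu m y (n+2)))

lemma R_zero : R m y 0 = ((tt m y 0 : ℚ) : ℝ) + D m y 0 + ww (uu m y 0) - ww (vv m y 0) := by
  rw [R, D, rr, ← zz_cast, ← zz_cast]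
  push_cast
  ring

lemma S_zero : S m y 0 = D m y 1 + ww (vv m y 0) - ww (uu m y 0) - ww (uu m y 1) := by
  rw [S, D, ss, ← zz_cast, ← zz_cast, ← zz_cast]
  push_cast
  ring

lemma R_abs (n : ℕ) : |R m y n| ≤ |y| + 4 := by
  have h0 : R m y 0 ≤ R m y n := (R_mono m y).monotone (Nat.zero_le n)
  have h1 := R_tail m y 0 n (Nat.zero_le n)
  simp only [Nat.mul_zero, Nat.zero_add] at h1
  have ht1 := tt_le m y 0
  have ht2 := lt_tt m y 0
  have hw0 : ww (gg m y 0) ≤ 1 := ww_le_one _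
  have hd0 : (0:ℝ) ≤ D m y 0 := dd_nonneg m y 0
  have hd1 : D m y 0 ≤ ww (gg m y 0) := dd_le m y 0
  have hu : (0:ℝ) < ww (uu m y 0) := ww_pos _
  have hu1 : ww (uu m y 0) ≤ 1 := ww_le_one _
  have hv : (0:ℝ) < ww (vv m y 0) := ww_pos _
  have hv1 : ww (vv m y 0) ≤ 1 := ww_le_one _
  have hw2 : (0:ℝ) < ww (gg m y 2) := ww_pos _
  have hw2' : ww (gg m y 2) ≤ 1 := ww_le_one _
  have hz := R_zero m y
  have hwn : (0:ℝ) < ww (gg m y (2*n+2)) := ww_pos _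
  have hy1 : y ≤ |y| := le_abs_self y
  have hy2 : -|y| ≤ y := neg_abs_le y
  rw [abs_le]
  constructor <;> [nlinarith; nlinarith]

lemma S_abs (n : ℕ) : |S m y n| ≤ |y| + 4 := by
  have h0 : S m y 0 ≤ S m y n := (S_mono m y).monotone (Nat.zero_le n)
  have h1 := S_tail m y 0 n (Nat.zero_le n)
  simp only [Nat.mul_zero, Nat.zero_add] at h1
  have hd0 : (0:ℝ) ≤ D m y 1 := dd_nonneg m y 1
  have hd1 : D m y 1 ≤ ww (gg m y 1) := dd_le m y 1
  have hw1 : ww (gg m y 1) ≤ 1 := ww_le_one _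
  have hu : (0:ℝ) < ww (uu m y 0) := ww_pos _
  have hu1 : ww (uu m y 0) ≤ 1 := ww_le_one _
  have hu2 : (0:ℝ) < ww (uu m y 1) := ww_pos _
  have hu3 : ww (uu m y 1) ≤ 1 := ww_le_one _
  have hv : (0:ℝ) < ww (vv m y 0) := ww_pos _
  have hv1 : ww (vv m y 0) ≤ 1 := ww_le_one _
  have hw3 : (0:ℝ) < ww (gg m y 3) := ww_pos _
  have hw3' : ww (gg m y 3) ≤ 1 := ww_le_one _
  have hz := S_zero m y
  have hwn : (0:ℝ) < ww (gg m y (2*n+3)) := ww_pos _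
  have hy0 : (0:ℝ) ≤ |y| := abs_nonneg y
  rw [abs_le]
  constructor <;> [nlinarith; nlinarith]

end MU


lemma algHeight_cc_add_le (m e : ℕ) (hm : 1 ≤ m) (r : ℚ) (p : ℤ)
    (hp : (r:ℚ) * 10^e = (p:ℚ)) :
    algHeight (cc m + (r:ℝ)) ≤ (p.natAbs + 10^e)^m + 2 * (10^e)^m := by
  have hdeg := degreeExactly_cc_add m hm r
  exact algHeight_le _ hdeg.1 (QQ_ne_zero m e hm p) (QQ_aeval m e hm r p hp)
    (by rw [QQ_natDegree m e hm p, hdeg.2]) (QQ_coeff_natAbs m e p)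

open MU in
lemma height_chain (m : ℕ) (hm : 1 ≤ m) (y : ℝ) (q : ℚ) (e : ℕ) (p : ℤ)
    (hp : q * 10^e = (p:ℚ)) (habs : |((q:ℚ):ℝ)| ≤ |y| + 4) :
    (algHeight (cc m + ((q:ℚ):ℝ)) : ℝ) ≤ AA m y * 10 ^ (m * e) := by
  have h1 : algHeight (cc m + ((q:ℚ):ℝ)) ≤ (p.natAbs + 10^e)^m + 2 * (10^e)^m :=
    algHeight_cc_add_le m e hm q p hp
  have hpR : ((q:ℚ):ℝ) * 10^e = ((p:ℤ):ℝ) := by exact_mod_cast congrArg (fun t:ℚ => (t:ℝ)) hp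
  have h10 : (0:ℝ) < (10:ℝ)^e := by positivity
  have h2 : ((p.natAbs : ℕ) : ℝ) ≤ (|y| + 4) * 10^e := by
    have : ((p.natAbs : ℕ) : ℝ) = |((p:ℤ):ℝ)| := by
      rw [Nat.cast_natAbs]
      push_cast
      ring
    rw [this, ← hpR, abs_mul, abs_of_pos h10]
    apply mul_le_mul_of_nonneg_right habs h10.le
  calc (algHeight (cc m + ((q:ℚ):ℝ)) : ℝ)
      ≤ (((p.natAbs + 10^e)^m + 2 * (10^e)^m : ℕ) : ℝ) := by exact_mod_cast h1
    _ = ((p.natAbs : ℕ) + (10:ℝ)^e)^m + 2 * ((10:ℝ)^e)^m := by push_cast; ring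
    _ ≤ ((|y| + 4) * 10^e + 10^e)^m + 2 * ((10:ℝ)^e)^m := by
        have hb : (0:ℝ) ≤ ((p.natAbs : ℕ) : ℝ) + (10:ℝ)^e := by positivity
        have := pow_le_pow_left₀ (by positivity : (0:ℝ) ≤ ((p.natAbs : ℕ) : ℝ) + (10:ℝ)^e)
          (by linarith : ((p.natAbs : ℕ) : ℝ) + (10:ℝ)^e ≤ (|y| + 4) * 10^e + 10^e) m
        linarith
    _ = ((|y| + 5))^m * ((10:ℝ)^e)^m + 2 * ((10:ℝ)^e)^m := by
        rw [← mul_pow]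
        ring_nf
    _ = AA m y * ((10:ℝ)^e)^m := by rw [AA]; ring
    _ = AA m y * 10 ^ (m * e) := by rw [← pow_mul, mul_comm e m]

open MU in
lemma hbnd_r (m : ℕ) (hm : 1 ≤ m) (y : ℝ) (n : ℕ) :
    LL m y - R m y n < (expCube (algHeight (cc m + ((rr m y n : ℚ) : ℝ))))⁻¹ ^ (n+1) := by
  obtain ⟨p, hp⟩ := isDen_rr m y n
  rw [vv] at hp
  have hH : (algHeight (cc m + ((rr m y n : ℚ):ℝ)) : ℝ)
      ≤ AA m y * 10 ^ (m * (gg m y (2*n+1) + 1)) := by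
    apply height_chain m hm y _ _ p hp
    exact R_abs m y n
  have key := gg_key m y (2*n+1) n (by omega)
  have hidx : gg m y (2*n+1+1) = gg m y (2*n+2) := by norm_num
  rw [hidx] at key
  have hE0 : (0:ℝ) < expCube (algHeight (cc m + ((rr m y n : ℚ):ℝ))) := Real.exp_pos _
  have hmono : (Real.exp (Real.exp (Real.exp (AA m y * 10 ^ (m * (gg m y (2*n+1) + 1))))))⁻¹ ^ (n+1)
      ≤ (expCube (algHeight (cc m + ((rr m y n : ℚ):ℝ))))⁻¹ ^ (n+1) := by
    apply pow_le_pow_left₀ (by positivity)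
    apply inv_anti₀ hE0
    rw [expCube]
    exact Real.exp_le_exp.mpr (Real.exp_le_exp.mpr (Real.exp_le_exp.mpr hH))
  have hub := L_sub_R m y n
  have hw := ww_pos (gg m y (2*n+2))
  have : LL m y - R m y n < 5 * ww (gg m y (2*n+2)) := by linarith
  calc LL m y - R m y n < 5 * ww (gg m y (2*n+2)) := this
    _ ≤ _ := le_trans key hmono

open MU in
lemma hbnd_s (m : ℕ) (hm : 1 ≤ m) (y : ℝ) (n : ℕ) :
    SS m y - S m y n < (expCube (algHeight (cc m + ((ss m y n : ℚ) : ℝ))))⁻¹ ^ (n+1) := by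
  obtain ⟨p, hp⟩ := isDen_ss m y n
  rw [uu] at hp
  have hH : (algHeight (cc m + ((ss m y n : ℚ):ℝ)) : ℝ)
      ≤ AA m y * 10 ^ (m * (gg m y (2*(n+1)) + 1)) := by
    apply height_chain m hm y _ _ p hp
    exact S_abs m y n
  have key := gg_key m y (2*(n+1)) n (by omega)
  have hidx : gg m y (2*(n+1)+1) = gg m y (2*n+3) := by ring_nf
  rw [hidx] at key
  have hE0 : (0:ℝ) < expCube (algHeight (cc m + ((ss m y n : ℚ):ℝ))) := Real.exp_pos _
  have hmono : (Real.exp (Real.exp (Real.exp (AA m y * 10 ^ (m * (gg m y (2*(n+1)) + 1))))))⁻¹ ^ (n+1)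
      ≤ (expCube (algHeight (cc m + ((ss m y n : ℚ):ℝ))))⁻¹ ^ (n+1) := by
    apply pow_le_pow_left₀ (by positivity)
    apply inv_anti₀ hE0
    rw [expCube]
    exact Real.exp_le_exp.mpr (Real.exp_le_exp.mpr (Real.exp_le_exp.mpr hH))
  have hub := S_sub_S m y n
  have hw := ww_pos (gg m y (2*n+3))
  have : SS m y - S m y n < 5 * ww (gg m y (2*n+3)) := by linarith
  calc SS m y - S m y n < 5 * ww (gg m y (2*n+3)) := this
    _ ≤ _ := le_trans key hmono

open MU in
lemma isMUltra_L (m : ℕ) (hm : 1 ≤ m) (y : ℝ) : IsMUltra m (cc m + LL m y) := by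
  refine ⟨fun n => cc m + R m y n, ?_, ?_⟩
  · have : StrictMono (fun n => cc m + R m y n) := fun a b h => by
      have := R_mono m y h
      simpa using this
    exact this.injective
  · intro n
    refine ⟨degreeExactly_cc_add m hm (rr m y n), ?_, ?_⟩
    · have h := R_lt_L m y n
      rw [show cc m + LL m y - (cc m + R m y n) = LL m y - R m y n by ring]
      rw [abs_of_pos (by linarith)]
      linarith
    · rw [show cc m + LL m y - (cc m + R m y n) = LL m y - R m y n by ring]
      have h := R_lt_L m y n
      rw [abs_of_pos (by linarith)]
      exact hbnd_r m hm y n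

open MU in
lemma isMUltra_S (m : ℕ) (hm : 1 ≤ m) (y : ℝ) : IsMUltra m (cc m + SS m y) := by
  refine ⟨fun n => cc m + S m y n, ?_, ?_⟩
  · have : StrictMono (fun n => cc m + S m y n) := fun a b h => by
      have := S_mono m y h
      simpa using this
    exact this.injective
  · intro n
    refine ⟨degreeExactly_cc_add m hm (ss m y n), ?_, ?_⟩
    · have h := S_lt_L m y n
      rw [show cc m + SS m y - (cc m + S m y n) = SS m y - S m y n by ring]
      rw [abs_of_pos (by linarith)]
      linarith
    · rw [show cc m + SS m y - (cc m + S m y n) = SS m y - S m y n by ring]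
      have h := S_lt_L m y n
      rw [abs_of_pos (by linarith)]
      exact hbnd_s m hm y n


/-- Every real number is the sum of two `m`-ultra numbers. -/
theorem stmt_5 (m : ℕ) (hm : 1 ≤ m) (x : ℝ) :
    ∃ a b : ℝ, IsMUltra m a ∧ IsMUltra m b ∧ x = a + b := by
  set y : ℝ := x - 2 * cc m with hy
  refine ⟨cc m + MU.LL m y, cc m + MU.SS m y, isMUltra_L m hm y, isMUltra_S m hm y, ?_⟩
  have := MU.sum_eq m y
  linarith
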